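/- For every β > 0 there exists a constant C = C(β) such that for every finitely supported sequence a : ℤ² → ℂ, the resonant nonlinearity satisfies ‖F(a)‖_{l²} ≤ C · ‖a‖_{l²}² · ‖a‖_{h^β}. -/

import Mathlib

noncomputable section

/-- The Euclidean norm squared of a lattice point in `ℤ²`. -/
def nsq (j : ℤ × ℤ) : ℤ := j.1 ^ 2 + j.2 ^ 2

/-- The discrete Sobolev norm `‖a‖_{h^s} = (∑_j ⟨j⟩^{2s} |a_j|²)^{1/2}`,
where `⟨j⟩^{2s} = (1 + |j|²)^s`.  In particular `hnorm 0 = ‖·‖_{l²}`. -/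
def hnorm (s : ℝ) (a : ℤ × ℤ → ℂ) : ℝ :=
  (∑' j : ℤ × ℤ, ((1 : ℝ) + (nsq j : ℝ)) ^ s * ‖a j‖ ^ 2) ^ ((1 : ℝ) / 2)

/-- The cubic resonant nonlinearity
`F(a)_j = ∑_{(j1,j2,j3) ∈ R(j)} a_{j1} conj(a_{j2}) a_{j3}` with
`R(j) = {(j1,j2,j3) : j1 - j2 + j3 = j, |j1|² - |j2|² + |j3|² = |j|²}`. -/
def Fnl (a : ℤ × ℤ → ℂ) (j : ℤ × ℤ) : ℂ :=
  ∑' p : (ℤ × ℤ) × (ℤ × ℤ) × (ℤ × ℤ),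
    if p.1 - p.2.1 + p.2.2 = j ∧ nsq p.1 - nsq p.2.1 + nsq p.2.2 = nsq j then
      a p.1 * (starRingEnd ℂ) (a p.2.1) * a p.2.2
    else 0

namespace ResCount

open Finset UniqueFactorizationMonoid

noncomputable instance : NormalizationMonoid GaussianInt :=
  UniqueFactorizationMonoid.strongNormalizationMonoid.toNormalizationMonoid

def mkG (y : ℤ × ℤ) : GaussianInt := ⟨y.1, y.2⟩

lemma card_le_prod_count {M : Multiset GaussianInt} (s : Finset (Multiset GaussianInt))
    (hs : ∀ b ∈ s, b ≤ M) :
    s.card ≤ ∏ a ∈ M.toFinset, (M.count a + 1) := by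
  classical
  have h := Finset.card_le_card_of_injOn
    (f := fun (b : Multiset GaussianInt) => (fun a _ => b.count a : ∀ a ∈ M.toFinset, ℕ))
    (s := s) (t := M.toFinset.pi fun a => Finset.range (M.count a + 1)) ?_ ?_
  · simpa [Finset.card_pi] using h
  · intro b hb
    rw [Finset.mem_coe, Finset.mem_pi]
    intro a _
    rw [Finset.mem_range]
    exact Nat.lt_succ_of_le (Multiset.count_le_of_le a (hs b hb))
  · intro b1 h1 b2 h2 he
    ext a
    by_cases ha : a ∈ M.toFinset
    · exact congrFun (congrFun he a) ha
    · have hM : M.count a = 0 :=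
        Multiset.count_eq_zero_of_notMem (fun h => ha (Multiset.mem_toFinset.mpr h))
      have e1 : b1.count a = 0 :=
        Nat.le_zero.mp (hM ▸ Multiset.count_le_of_le a (hs b1 h1))
      have e2 : b2.count a = 0 :=
        Nat.le_zero.mp (hM ▸ Multiset.count_le_of_le a (hs b2 h2))
      rw [e1, e2]

end ResCount

namespace ResCount2
open Finset UniqueFactorizationMonoid ResCount

lemma int_le_sq (t : ℤ) : t ≤ t ^ 2 := by
  rcases le_or_gt t 0 with h | h
  · nlinarith [sq_nonneg t]
  · nlinarith

lemma nsq_nonneg (y : ℤ × ℤ) : 0 ≤ nsq y := by unfold nsq; positivity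

def SolZ (k : ℤ) : Finset (ℤ × ℤ) :=
  (Finset.Icc (-k) k ×ˢ Finset.Icc (-k) k).filter fun y => nsq y = k

lemma mem_SolZ {y : ℤ × ℤ} {k : ℤ} (h : nsq y = k) : y ∈ SolZ k := by
  have h1 : y.1 ^ 2 + y.2 ^ 2 = k := h
  refine Finset.mem_filter.mpr ⟨Finset.mem_product.mpr ⟨?_, ?_⟩, h⟩ <;>
  · rw [Finset.mem_Icc]
    constructor <;> nlinarith [int_le_sq y.1, int_le_sq y.2, int_le_sq (-y.1), int_le_sq (-y.2),
      sq_nonneg y.1, sq_nonneg y.2]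

lemma normG (y : ℤ × ℤ) : (mkG y).norm = nsq y := by
  simp [Zsqrtd.norm_def, mkG, nsq]; ring

lemma unit_cases {u : GaussianInt} (hu : IsUnit u) :
    u = ⟨1,0⟩ ∨ u = ⟨-1,0⟩ ∨ u = ⟨0,1⟩ ∨ u = ⟨0,-1⟩ := by
  have h1 : u.norm = 1 := (Zsqrtd.norm_eq_one_iff' (by norm_num) u).mpr hu
  rw [Zsqrtd.norm_def] at h1
  obtain ⟨r, i⟩ := u
  simp only at h1
  have hr1 : -1 ≤ r := by nlinarith [sq_nonneg i, sq_nonneg r]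
  have hr2 : r ≤ 1 := by nlinarith [sq_nonneg i, sq_nonneg r]
  have hi1 : -1 ≤ i := by nlinarith [sq_nonneg i, sq_nonneg r]
  have hi2 : i ≤ 1 := by nlinarith [sq_nonneg i, sq_nonneg r]
  interval_cases r <;> interval_cases i <;> simp_all

lemma mkG_dvd {y : ℤ × ℤ} {k : ℤ} (h : nsq y = k) : mkG y ∣ (k : GaussianInt) := by
  refine ⟨star (mkG y), ?_⟩
  have := Zsqrtd.norm_eq_mul_conj (mkG y)
  rw [normG, h] at this
  exact this

lemma mkG_ne_zero {y : ℤ × ℤ} {k : ℤ} (h : nsq y = k) (hk : 1 ≤ k) : mkG y ≠ 0 := by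
  intro h0
  have : (0 : ℤ) = k := by rw [← h, ← normG, h0]; simp [Zsqrtd.norm]
  omega

lemma card_SolZ_le (k : ℤ) (hk : 1 ≤ k) :
    (SolZ k).card ≤ 4 * ∏ a ∈ (normalizedFactors (k : GaussianInt)).toFinset,
      ((normalizedFactors (k : GaussianInt)).count a + 1) := by
  classical
  set M := normalizedFactors (k : GaussianInt) with hM
  have hkG : (k : GaussianInt) ≠ 0 := by
    exact Int.cast_ne_zero.mpr (by omega)
  have key := Finset.card_le_mul_card_image (f := fun y => normalizedFactors (mkG y))
    (SolZ k) 4 ?_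
  · refine key.trans ?_
    have him : ((SolZ k).image fun y => normalizedFactors (mkG y)).card ≤
        ∏ a ∈ M.toFinset, (M.count a + 1) := by
      apply card_le_prod_count
      intro b hb
      obtain ⟨y, hy, rfl⟩ := Finset.mem_image.mp hb
      have hnsq : nsq y = k := (Finset.mem_filter.mp hy).2
      exact (dvd_iff_normalizedFactors_le_normalizedFactors (mkG_ne_zero hnsq hk) hkG).mp
        (mkG_dvd hnsq)
    omega
  · -- fibers have at most 4 elements
    intro b hb
    obtain ⟨y0, hy0, hb0⟩ := Finset.mem_image.mp hb
    set z0 := mkG y0 with hz0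
    set s' := (SolZ k).filter (fun y => normalizedFactors (mkG y) = b) with hs'
    have hinj : ∀ y ∈ s', mkG y ∈ ({z0, -z0, z0 * ⟨0,1⟩, z0 * ⟨0,-1⟩} : Finset GaussianInt) := by
      intro y hy
      obtain ⟨hySol, hyfac⟩ := Finset.mem_filter.mp hy
      have hnsq : nsq y = k := (Finset.mem_filter.mp hySol).2
      have hnsq0 : nsq y0 = k := (Finset.mem_filter.mp hy0).2
      have hassoc : Associated z0 (mkG y) := by
        have a1 : Associated z0 (normalizedFactors z0).prod :=
          (prod_normalizedFactors (mkG_ne_zero hnsq0 hk)).symm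
        have a2 : Associated (normalizedFactors (mkG y)).prod (mkG y) :=
          prod_normalizedFactors (mkG_ne_zero hnsq hk)
        rw [hb0, ← hyfac] at a1
        exact a1.trans a2
      obtain ⟨u, hu⟩ := hassoc
      rcases unit_cases u.isUnit with h | h | h | h <;> rw [h] at hu <;>
        simp only [Finset.mem_insert, Finset.mem_singleton] <;> rw [← hu]
      · left
        have : (⟨1,0⟩ : GaussianInt) = 1 := rfl
        rw [this, mul_one]
      · right; left
        have : (⟨-1,0⟩ : GaussianInt) = -1 := rfl
        rw [this, mul_neg_one]
      · right; right; left; rfl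
      · right; right; right; rfl
    have hcard : s'.card ≤ ({z0, -z0, z0 * ⟨0,1⟩, z0 * ⟨0,-1⟩} : Finset GaussianInt).card := by
      apply Finset.card_le_card_of_injOn mkG hinj
      intro y1 _ y2 _ he
      have h1 := congrArg Zsqrtd.re he
      have h2 := congrArg Zsqrtd.im he
      exact Prod.ext h1 h2
    refine hcard.trans ?_
    apply (Finset.card_insert_le _ _).trans
    apply Nat.succ_le_succ
    apply (Finset.card_insert_le _ _).trans
    apply Nat.succ_le_succ
    exact Finset.card_insert_le _ _

end ResCount2

namespace ResCount3
open Finset UniqueFactorizationMonoid ResCount ResCount2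

lemma norm_two_le {a : GaussianInt} (ha : Irreducible a) : 2 ≤ a.norm := by
  have h0 : a ≠ 0 := ha.ne_zero
  have hnn : 0 ≤ a.norm := Zsqrtd.norm_nonneg (by norm_num) a
  have h1 : a.norm ≠ 1 := fun h => ha.not_isUnit ((Zsqrtd.norm_eq_one_iff' (by norm_num) a).mp h)
  have hz : a.norm ≠ 0 := by
    intro h
    apply h0
    rw [Zsqrtd.norm_def] at h
    have hre : a.re = 0 := by nlinarith [sq_nonneg a.re, sq_nonneg a.im]
    have him : a.im = 0 := by nlinarith [sq_nonneg a.re, sq_nonneg a.im]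
    ext <;> simp [hre, him]
  omega

lemma prod_count_le (δ : ℝ) (hδ : 0 < δ) :
    ∃ C : ℝ, 1 ≤ C ∧ ∀ k : ℤ, 1 ≤ k →
      ((∏ a ∈ (normalizedFactors (k : GaussianInt)).toFinset,
        ((normalizedFactors (k : GaussianInt)).count a + 1) : ℕ) : ℝ)
        ≤ C * ((k : ℝ) ^ 2) ^ δ := by
  classical
  set L := Real.log 2 with hLdef
  have hL : 0 < L := Real.log_pos (by norm_num)
  set Mδ : ℝ := 1 + 1 / (δ * L) with hMdef
  have hδL : 0 < δ * L := mul_pos hδ hL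
  have hM1 : 1 ≤ Mδ := by
    have : 0 < 1 / (δ * L) := by positivity
    rw [hMdef]; linarith
  set B : ℝ := (2 : ℝ) ^ (1 / δ) with hBdef
  have hB0 : 0 < B := Real.rpow_pos_of_pos (by norm_num) _
  set Bn : ℕ := ⌈B⌉₊ with hBndef
  set box : Finset (ℤ × ℤ) := Finset.Icc (-(Bn : ℤ)) Bn ×ˢ Finset.Icc (-(Bn : ℤ)) Bn with hbox
  refine ⟨Mδ ^ box.card, one_le_pow₀ hM1, ?_⟩
  intro k hk
  have hkG : (k : GaussianInt) ≠ 0 := Int.cast_ne_zero.mpr (by omega)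
  set M := normalizedFactors (k : GaussianInt) with hM
  set F := M.toFinset with hF
  have hirr : ∀ a ∈ F, Irreducible a := fun a ha =>
    irreducible_of_normalized_factor a (Multiset.mem_toFinset.mp ha)
  have hN2 : ∀ a ∈ F, (2 : ℝ) ≤ (a.norm : ℝ) := fun a ha => by
    exact_mod_cast Int.cast_le.mpr (norm_two_le (hirr a ha))
  -- the norm product identity
  have hprodnorm : ∏ a ∈ F, (a.norm : ℝ) ^ M.count a = (k : ℝ) ^ 2 := by
    have h1 : (M.map Zsqrtd.norm).prod = Zsqrtd.norm M.prod :=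
      (Multiset.prod_hom M (Zsqrtd.normMonoidHom (d := -1))).symm ▸ rfl
    obtain ⟨u, hu⟩ := prod_normalizedFactors hkG
    have hnu : Zsqrtd.norm (u : GaussianInt) = 1 :=
      (Zsqrtd.norm_eq_one_iff' (by norm_num) _).mpr u.isUnit
    have h2 : Zsqrtd.norm M.prod = k ^ 2 := by
      have := congrArg Zsqrtd.norm hu
      rw [Zsqrtd.norm_mul, hnu, mul_one] at this
      rw [this, Zsqrtd.norm_def, Zsqrtd.re_intCast, Zsqrtd.im_intCast]
      ring
    have h3 : ∏ a ∈ F, a.norm ^ M.count a = k ^ 2 := by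
      rw [hF, ← Finset.prod_multiset_map_count, h1, h2]
    calc ∏ a ∈ F, (a.norm : ℝ) ^ M.count a
        = ((∏ a ∈ F, a.norm ^ M.count a : ℤ) : ℝ) := by push_cast; ring
      _ = (k : ℝ) ^ 2 := by rw [h3]; push_cast; ring
  -- pointwise bound
  have key : ∀ a ∈ F, ((M.count a : ℝ) + 1) ≤
      (if (a.norm : ℝ) < B then Mδ else 1) * ((a.norm : ℝ) ^ M.count a) ^ δ := by
    intro a ha
    set N : ℝ := (a.norm : ℝ) with hNdef
    set c : ℕ := M.count a with hcdef
    have hN0 : (0 : ℝ) ≤ N := le_trans (by norm_num) (hN2 a ha)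
    by_cases hsmall : N < B
    · rw [if_pos hsmall]
      have hNc : (N ^ c) ^ δ = N ^ ((c : ℝ) * δ) := by
        rw [← Real.rpow_natCast N c, ← Real.rpow_mul hN0]
      have h2c : (2 : ℝ) ^ ((c : ℝ) * δ) ≤ N ^ ((c : ℝ) * δ) :=
        Real.rpow_le_rpow (by norm_num) (hN2 a ha) (by positivity)
      have hexp : 1 + (c : ℝ) * δ * L ≤ (2 : ℝ) ^ ((c : ℝ) * δ) := by
        rw [Real.rpow_def_of_pos (by norm_num), ← hLdef]
        calc 1 + (c : ℝ) * δ * L = L * ((c:ℝ) * δ) + 1 := by ring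
          _ ≤ Real.exp (L * ((c:ℝ) * δ)) := Real.add_one_le_exp _
      have hMain : ((c : ℝ) + 1) ≤ Mδ * (1 + (c : ℝ) * δ * L) := by
        have hinv : 1 / (δ * L) * (δ * L) = 1 := by field_simp
        have hc0 : (0 : ℝ) ≤ (c : ℝ) := Nat.cast_nonneg c
        rw [hMdef]
        nlinarith [mul_nonneg hc0 hδL.le, mul_pos hδ hL]
      calc ((c : ℝ) + 1) ≤ Mδ * (1 + (c : ℝ) * δ * L) := hMain
        _ ≤ Mδ * ((2 : ℝ) ^ ((c : ℝ) * δ)) := by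
            apply mul_le_mul_of_nonneg_left hexp (by linarith)
        _ ≤ Mδ * (N ^ ((c : ℝ) * δ)) := mul_le_mul_of_nonneg_left h2c (by linarith)
        _ = Mδ * (N ^ c) ^ δ := by rw [hNc]
    · rw [if_neg hsmall, one_mul]
      push_neg at hsmall
      have h2N : (2 : ℝ) ≤ N ^ δ := by
        calc (2:ℝ) = B ^ δ := by
              rw [hBdef, ← Real.rpow_mul (by norm_num : (0:ℝ) ≤ 2)]
              rw [one_div_mul_cancel (ne_of_gt hδ), Real.rpow_one]
          _ ≤ N ^ δ := Real.rpow_le_rpow hB0.le hsmall hδ.le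
      calc ((c : ℝ) + 1) ≤ (2 : ℝ) ^ c := by
            exact_mod_cast Nat.cast_le.mpr (Nat.succ_le_of_lt (Nat.lt_two_pow_self (n := c)))
        _ ≤ (N ^ δ) ^ c := pow_le_pow_left₀ (by norm_num) h2N c
        _ = (N ^ c) ^ δ := by
            rw [← Real.rpow_natCast (N ^ δ) c, ← Real.rpow_natCast N c,
              ← Real.rpow_mul hN0, ← Real.rpow_mul hN0, mul_comm]
  -- assemble
  calc ((∏ a ∈ F, (M.count a + 1) : ℕ) : ℝ)
      = ∏ a ∈ F, ((M.count a : ℝ) + 1) := by push_cast; ring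
    _ ≤ ∏ a ∈ F, (if (a.norm : ℝ) < B then Mδ else 1) * ((a.norm : ℝ) ^ M.count a) ^ δ := by
        apply Finset.prod_le_prod (fun a _ => by positivity) key
    _ = (∏ a ∈ F, if (a.norm : ℝ) < B then Mδ else 1) *
        ∏ a ∈ F, ((a.norm : ℝ) ^ M.count a) ^ δ := Finset.prod_mul_distrib
    _ ≤ Mδ ^ box.card * ((k : ℝ) ^ 2) ^ δ := by
        have hif : (∏ a ∈ F, if (a.norm : ℝ) < B then Mδ else 1) ≤ Mδ ^ box.card := by
          rw [Finset.prod_ite, Finset.prod_const, Finset.prod_const_one, mul_one]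
          apply pow_le_pow_right₀ hM1
          apply Finset.card_le_card_of_injOn (fun a => (a.re, a.im))
          · intro a ha
            obtain ⟨haF, haB⟩ := Finset.mem_filter.mp ha
            have h2 : 2 ≤ a.norm := norm_two_le (hirr a haF)
            have hle : a.norm ≤ (Bn : ℤ) := by
              have : (a.norm : ℝ) < (Bn : ℝ) := lt_of_lt_of_le haB (Nat.le_ceil B)
              exact_mod_cast this.le
            have hnd : a.re * a.re + a.im * a.im = a.norm := by
              rw [Zsqrtd.norm_def]; ring
            rw [hbox, Finset.mem_coe, Finset.mem_product]
            constructor <;> rw [Finset.mem_Icc] <;> constructor <;>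
              nlinarith [int_le_sq a.re, int_le_sq a.im, int_le_sq (-a.re), int_le_sq (-a.im),
                sq_nonneg a.re, sq_nonneg a.im]
          · intro a1 _ a2 _ he
            have h1 := congrArg Prod.fst he
            have h2 := congrArg Prod.snd he
            ext <;> simpa using ‹_›
        have heq : ∏ a ∈ F, ((a.norm : ℝ) ^ M.count a) ^ δ = ((k : ℝ) ^ 2) ^ δ := by
          rw [← hprodnorm]
          exact (Real.finset_prod_rpow F _
            (fun a ha => pow_nonneg (le_trans zero_le_two (hN2 a ha)) _) δ)
        rw [heq]
        apply mul_le_mul_of_nonneg_right hif (Real.rpow_nonneg (by positivity) δ)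

end ResCount3

namespace ResCount4
open Finset UniqueFactorizationMonoid ResCount ResCount2 ResCount3

lemma countSol (δ : ℝ) (hδ : 0 < δ) :
    ∃ C : ℝ, 1 ≤ C ∧ ∀ k : ℤ, 0 ≤ k → ((SolZ k).card : ℝ) ≤ C * (1 + (k : ℝ)) ^ δ := by
  obtain ⟨C', hC1, hC⟩ := prod_count_le (δ / 2) (by positivity)
  refine ⟨4 * C', by linarith, ?_⟩
  intro k hk
  have h1k : (0 : ℝ) ≤ 1 + (k : ℝ) := by
    have : (0 : ℝ) ≤ (k : ℝ) := by exact_mod_cast hk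
    linarith
  rcases eq_or_lt_of_le hk with h0 | h0
  · -- k = 0
    subst h0
    have hcard : (SolZ 0).card ≤ 1 := by
      have hsub : SolZ 0 ⊆ {(0, 0)} := by
        intro y hy
        have h2 : y.1 ^ 2 + y.2 ^ 2 = 0 := (Finset.mem_filter.mp hy).2
        have e1 : y.1 ^ 2 = 0 := le_antisymm (by nlinarith [sq_nonneg y.2]) (sq_nonneg y.1)
        have e2 : y.2 ^ 2 = 0 := le_antisymm (by nlinarith [sq_nonneg y.1]) (sq_nonneg y.2)
        rw [Finset.mem_singleton, Prod.ext_iff]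
        constructor <;> [exact pow_eq_zero_iff two_ne_zero |>.mp e1;
          exact pow_eq_zero_iff two_ne_zero |>.mp e2]
      calc (SolZ 0).card ≤ ({(0,0)} : Finset (ℤ × ℤ)).card := Finset.card_le_card hsub
        _ = 1 := Finset.card_singleton _
    have hrp : (1 : ℝ) ≤ (1 + ((0:ℤ) : ℝ)) ^ δ := by norm_num
    calc ((SolZ 0).card : ℝ) ≤ 1 := by exact_mod_cast hcard
      _ ≤ (4 * C') * (1 + ((0:ℤ):ℝ)) ^ δ := by nlinarith
  · -- 1 ≤ k
    have hk1 : (1 : ℤ) ≤ k := h0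
    have hcast : ((SolZ k).card : ℝ) ≤ 4 * ((∏ a ∈ (normalizedFactors (k : GaussianInt)).toFinset,
        ((normalizedFactors (k : GaussianInt)).count a + 1) : ℕ) : ℝ) := by
      exact_mod_cast Nat.cast_le.mpr (card_SolZ_le k hk1)
    have hk0 : (0 : ℝ) ≤ (k : ℝ) := by exact_mod_cast hk
    have hpow : ((k : ℝ) ^ 2) ^ (δ/2) = (k : ℝ) ^ δ := by
      rw [← Real.rpow_natCast (k : ℝ) 2, ← Real.rpow_mul hk0]
      congr 1
      push_cast
      ring
    have hmono : (k : ℝ) ^ δ ≤ (1 + (k : ℝ)) ^ δ :=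
      Real.rpow_le_rpow hk0 (by linarith) hδ.le
    calc ((SolZ k).card : ℝ) ≤ 4 * (C' * ((k : ℝ) ^ 2) ^ (δ/2)) := by
          refine hcast.trans ?_
          apply mul_le_mul_of_nonneg_left (hC k hk1) (by norm_num)
      _ = 4 * C' * ((k : ℝ) ^ δ) := by rw [hpow]; ring
      _ ≤ 4 * C' * (1 + (k : ℝ)) ^ δ := by
          apply mul_le_mul_of_nonneg_left hmono (by linarith)

end ResCount4

namespace ResMain

open Finset

abbrev Pt := ℤ × ℤ
abbrev Tr := Pt × Pt × Pt

def jof (p : Tr) : Pt := p.1 - p.2.1 + p.2.2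

lemma key_id (u v w : Pt) (H : nsq u - nsq v + nsq w = nsq (u - v + w)) :
    nsq (u + w - v - v) = nsq (u - w) := by
  obtain ⟨u1, u2⟩ := u; obtain ⟨v1, v2⟩ := v; obtain ⟨w1, w2⟩ := w
  simp only [nsq, Prod.mk_add_mk, Prod.mk_sub_mk] at H ⊢
  linear_combination (-2 : ℤ) * H

lemma nsq_sub_le (x z : Pt) : nsq (x - z) ≤ 2 * nsq x + 2 * nsq z := by
  obtain ⟨x1, x2⟩ := x; obtain ⟨z1, z2⟩ := z
  simp only [nsq, Prod.mk_sub_mk]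
  nlinarith [sq_nonneg (x1 + z1), sq_nonneg (x2 + z2)]

lemma nsq_nonneg' (y : Pt) : 0 ≤ nsq y := by unfold nsq; positivity

lemma le_of_sq {x y : ℝ} (hy : 0 ≤ y) (h : x ^ 2 ≤ y ^ 2) : x ≤ y := by
  nlinarith [sq_nonneg (x - y), sq_nonneg (x + y)]

lemma rpow_sq {x : ℝ} (hx : 0 ≤ x) (e : ℝ) : (x ^ e) ^ 2 = x ^ (2 * e) := by
  rw [← Real.rpow_natCast (x ^ e) 2, ← Real.rpow_mul hx]
  norm_num [mul_comm]

lemma sq_rpow_half {x : ℝ} (hx : 0 ≤ x) : (x ^ ((1:ℝ)/2)) ^ 2 = x := by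
  rw [← Real.rpow_natCast (x ^ ((1:ℝ)/2)) 2, ← Real.rpow_mul hx]
  norm_num

lemma prod_split (s t : Finset Pt) (F G : Pt → ℝ) :
    ∑ q ∈ s ×ˢ t, F q.1 * G q.2 = (∑ x ∈ s, F x) * (∑ z ∈ t, G z) := by
  rw [Finset.sum_product, Finset.sum_mul]
  apply Finset.sum_congr rfl
  intro x _
  rw [Finset.mul_sum]

end ResMain

namespace ResMain2
open Finset ResMain

lemma mem_triple_iff {A : Finset Pt} {p : Tr} :
    p ∈ A ×ˢ A ×ˢ A ↔ p.1 ∈ A ∧ p.2.1 ∈ A ∧ p.2.2 ∈ A := by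
  simp [Finset.mem_product, and_assoc]

def TriS (A : Finset Pt) : Finset Tr :=
  (A ×ˢ A ×ˢ A).filter fun p => nsq p.1 - nsq p.2.1 + nsq p.2.2 = nsq (jof p)

def Jset (A : Finset Pt) : Finset Pt := (A ×ˢ A ×ˢ A).image jof

lemma jof_mem_Jset {A : Finset Pt} {p : Tr} (hp : p ∈ TriS A) : jof p ∈ Jset A :=
  Finset.mem_image_of_mem jof (Finset.mem_filter.mp hp).1

lemma Fnl_eq {a : ℤ × ℤ → ℂ} {A : Finset Pt} (hA : ∀ j ∉ A, a j = 0) (j : Pt) :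
    Fnl a j = ∑ p ∈ (TriS A).filter (fun p => jof p = j),
      a p.1 * (starRingEnd ℂ) (a p.2.1) * a p.2.2 := by
  rw [Fnl, tsum_eq_sum (s := (TriS A).filter (fun p => jof p = j)) ?_]
  · apply Finset.sum_congr rfl
    intro p hp
    obtain ⟨hpT, hpj⟩ := Finset.mem_filter.mp hp
    obtain ⟨hpA, hres⟩ := Finset.mem_filter.mp hpT
    have hpj' : p.1 - p.2.1 + p.2.2 = j := hpj
    rw [if_pos ⟨hpj', by rw [← hpj']; exact hres⟩]
  · intro p hp
    by_cases hc : p.1 - p.2.1 + p.2.2 = j ∧ nsq p.1 - nsq p.2.1 + nsq p.2.2 = nsq j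
    · rw [if_pos hc]
      by_cases h1 : p.1 ∈ A
      · by_cases h2 : p.2.1 ∈ A
        · by_cases h3 : p.2.2 ∈ A
          · exfalso
            apply hp
            refine Finset.mem_filter.mpr ⟨Finset.mem_filter.mpr
              ⟨mem_triple_iff.mpr ⟨h1, h2, h3⟩, ?_⟩, hc.1⟩
            have : jof p = j := hc.1
            rw [this]
            exact hc.2
          · rw [hA _ h3, mul_zero]
        · rw [hA _ h2, map_zero, mul_zero, zero_mul]
      · rw [hA _ h1, zero_mul, zero_mul]
    · rw [if_neg hc]

lemma Fnl_zero {a : ℤ × ℤ → ℂ} {A : Finset Pt} (hA : ∀ j ∉ A, a j = 0) {j : Pt}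
    (hj : j ∉ Jset A) : Fnl a j = 0 := by
  rw [Fnl_eq hA j]
  apply Finset.sum_eq_zero
  intro p hp
  exfalso
  obtain ⟨hpT, hpj⟩ := Finset.mem_filter.mp hp
  exact hj (hpj ▸ jof_mem_Jset hpT)

end ResMain2

namespace ResMain3
open Finset ResMain ResMain2 ResCount ResCount2

def sg (x : Pt) : ℝ := 1 + (nsq x : ℝ)

lemma sg_one_le (x : Pt) : 1 ≤ sg x := by
  have := nsq_nonneg' x
  unfold sg
  have : (0:ℝ) ≤ (nsq x : ℝ) := by exact_mod_cast this
  linarith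

lemma sg_pos (x : Pt) : 0 < sg x := lt_of_lt_of_le one_pos (sg_one_le x)

def Vset (A : Finset Pt) : Finset Tr :=
  (TriS A).filter fun p => nsq p.2.2 ≤ nsq p.1

variable {a : ℤ × ℤ → ℂ} {A : Finset Pt} {β Cc : ℝ}

lemma res_of_mem {p : Tr} (hp : p ∈ TriS A) :
    nsq p.1 - nsq p.2.1 + nsq p.2.2 = nsq (p.1 - p.2.1 + p.2.2) :=
  (Finset.mem_filter.mp hp).2

-- the two geometric facts on the resonant set
lemma circle_id {p : Tr} (hp : p ∈ TriS A) :
    nsq (p.1 + p.2.2 - p.2.1 - p.2.1) = nsq (p.1 - p.2.2) :=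
  key_id p.1 p.2.1 p.2.2 (res_of_mem hp)

lemma radius_le {p : Tr} (hp : p ∈ Vset A) :
    (1 : ℝ) + (nsq (p.1 - p.2.2) : ℝ) ≤ 4 * sg p.1 := by
  obtain ⟨hpT, hple⟩ := Finset.mem_filter.mp hp
  have h1 : nsq (p.1 - p.2.2) ≤ 2 * nsq p.1 + 2 * nsq p.2.2 := nsq_sub_le _ _
  have h2 : nsq (p.1 - p.2.2) ≤ 4 * nsq p.1 := by omega
  have h3 : ((nsq (p.1 - p.2.2)) : ℝ) ≤ 4 * (nsq p.1 : ℝ) := by exact_mod_cast h2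
  unfold sg
  linarith

lemma hXbound (hβ : 0 < β) (hCc0 : 0 ≤ Cc)
    (hCc : ∀ k : ℤ, 0 ≤ k → ((SolZ k).card : ℝ) ≤ Cc * (1 + (k : ℝ)) ^ (β/4)) :
    ∑ p ∈ Vset A, sg p.1 ^ (β/2) * (‖a p.1‖^2 * ‖a p.2.2‖^2) ≤
      (Cc * (4:ℝ) ^ (β/4)) *
        ((∑ x ∈ A, sg x ^ β * ‖a x‖^2) * (∑ z ∈ A, ‖a z‖^2)) := by
  classical
  set φ : Tr → Pt × Pt := fun p => (p.1, p.2.2) with hφ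
  have hmaps : ∀ p ∈ Vset A, φ p ∈ (Vset A).image φ := fun p hp =>
    Finset.mem_image_of_mem φ hp
  rw [← Finset.sum_fiberwise_of_maps_to hmaps
    (fun p => sg p.1 ^ (β/2) * (‖a p.1‖^2 * ‖a p.2.2‖^2))]
  have inner : ∀ q ∈ (Vset A).image φ,
      ∑ p ∈ (Vset A).filter (fun p => φ p = q), sg p.1 ^ (β/2) * (‖a p.1‖^2 * ‖a p.2.2‖^2)
        ≤ (Cc * (4:ℝ) ^ (β/4)) * (sg q.1 ^ β * ‖a q.1‖^2 * ‖a q.2‖^2) := by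
    intro q hq
    obtain ⟨p₀, hp₀, hφ₀⟩ := Finset.mem_image.mp hq
    -- constant value on the fiber
    have hconst : ∀ p ∈ (Vset A).filter (fun p => φ p = q),
        sg p.1 ^ (β/2) * (‖a p.1‖^2 * ‖a p.2.2‖^2)
          = sg q.1 ^ (β/2) * (‖a q.1‖^2 * ‖a q.2‖^2) := by
      intro p hp
      have hpq : φ p = q := (Finset.mem_filter.mp hp).2
      have h1 : p.1 = q.1 := (Prod.ext_iff.mp hpq).1
      have h2 : p.2.2 = q.2 := (Prod.ext_iff.mp hpq).2
      rw [h1, h2]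
    rw [Finset.sum_congr rfl hconst, Finset.sum_const, nsmul_eq_mul]
    -- count the fiber
    have hcard : (((Vset A).filter (fun p => φ p = q)).card : ℝ) ≤
        Cc * (1 + ((nsq (q.1 - q.2)) : ℝ)) ^ (β/4) := by
      have hinj : ((Vset A).filter (fun p => φ p = q)).card ≤ (SolZ (nsq (q.1 - q.2))).card := by
        apply Finset.card_le_card_of_injOn (fun p => p.1 + p.2.2 - p.2.1 - p.2.1)
        · intro p hp
          obtain ⟨hpV, hpq⟩ := Finset.mem_filter.mp hp
          have hpT : p ∈ TriS A := (Finset.mem_filter.mp hpV).1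
          have h1 : p.1 = q.1 := (Prod.ext_iff.mp hpq).1
          have h2 : p.2.2 = q.2 := (Prod.ext_iff.mp hpq).2
          apply mem_SolZ
          rw [circle_id hpT, h1, h2]
        · intro p1 hp1 p2 hp2 he
          simp only [Finset.coe_filter, Set.mem_setOf_eq] at hp1 hp2
          have a1 : p1.1 = q.1 := (Prod.ext_iff.mp hp1.2).1
          have a2 : p2.1 = q.1 := (Prod.ext_iff.mp hp2.2).1
          have b1 : p1.2.2 = q.2 := (Prod.ext_iff.mp hp1.2).2
          have b2 : p2.2.2 = q.2 := (Prod.ext_iff.mp hp2.2).2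
          have hmid : p1.2.1 = p2.2.1 := by
            have he' : p1.1 + p1.2.2 - p1.2.1 - p1.2.1 = p2.1 + p2.2.2 - p2.2.1 - p2.2.1 := he
            rw [a1, a2, b1, b2] at he'
            have c1 := (Prod.ext_iff.mp he').1
            have c2 := (Prod.ext_iff.mp he').2
            simp only [Prod.fst_sub, Prod.fst_add, Prod.snd_sub, Prod.snd_add] at c1 c2
            exact Prod.ext_iff.mpr ⟨by omega, by omega⟩
          exact Prod.ext_iff.mpr ⟨a1.trans a2.symm, Prod.ext_iff.mpr ⟨hmid, b1.trans b2.symm⟩⟩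
      calc (((Vset A).filter (fun p => φ p = q)).card : ℝ)
          ≤ ((SolZ (nsq (q.1 - q.2))).card : ℝ) := by exact_mod_cast hinj
        _ ≤ Cc * (1 + ((nsq (q.1 - q.2)) : ℝ)) ^ (β/4) := hCc _ (nsq_nonneg' _)
    -- radius bound: the fiber is nonempty hence q inherits nsq q.2 ≤ nsq q.1
    have hrad : (1 : ℝ) + (nsq (q.1 - q.2) : ℝ) ≤ 4 * sg q.1 := by
      have h1 : p₀.1 = q.1 := (Prod.ext_iff.mp hφ₀).1
      have h2 : p₀.2.2 = q.2 := (Prod.ext_iff.mp hφ₀).2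
      have := radius_le (A := A) (p := p₀) hp₀
      rw [h1, h2] at this
      exact this
    -- put the pieces together
    have hrpow : (1 + ((nsq (q.1 - q.2)) : ℝ)) ^ (β/4) ≤ (4:ℝ) ^ (β/4) * sg q.1 ^ (β/4) := by
      have h0 : (0:ℝ) ≤ 1 + ((nsq (q.1 - q.2)) : ℝ) := by
        have := nsq_nonneg' (q.1 - q.2)
        have : (0:ℝ) ≤ ((nsq (q.1 - q.2)) : ℝ) := by exact_mod_cast this
        linarith
      calc (1 + ((nsq (q.1 - q.2)) : ℝ)) ^ (β/4) ≤ (4 * sg q.1) ^ (β/4) :=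
            Real.rpow_le_rpow h0 hrad (by positivity)
        _ = (4:ℝ) ^ (β/4) * sg q.1 ^ (β/4) :=
            Real.mul_rpow (by norm_num) (sg_pos q.1).le
    have hexp : sg q.1 ^ (β/4) * sg q.1 ^ (β/2) ≤ sg q.1 ^ β := by
      rw [← Real.rpow_add (sg_pos q.1)]
      apply Real.rpow_le_rpow_of_exponent_le (sg_one_le q.1)
      linarith
    have hnn : (0:ℝ) ≤ sg q.1 ^ (β/2) * (‖a q.1‖^2 * ‖a q.2‖^2) :=
      mul_nonneg (Real.rpow_nonneg (sg_pos q.1).le _) (by positivity)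
    calc (((Vset A).filter (fun p => φ p = q)).card : ℝ) *
          (sg q.1 ^ (β/2) * (‖a q.1‖^2 * ‖a q.2‖^2))
        ≤ (Cc * (1 + ((nsq (q.1 - q.2)) : ℝ)) ^ (β/4)) *
          (sg q.1 ^ (β/2) * (‖a q.1‖^2 * ‖a q.2‖^2)) := by
          apply mul_le_mul_of_nonneg_right hcard hnn
      _ ≤ (Cc * ((4:ℝ) ^ (β/4) * sg q.1 ^ (β/4))) *
          (sg q.1 ^ (β/2) * (‖a q.1‖^2 * ‖a q.2‖^2)) := by
          apply mul_le_mul_of_nonneg_right _ hnn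
          exact mul_le_mul_of_nonneg_left hrpow hCc0
      _ = (Cc * (4:ℝ) ^ (β/4)) * ((sg q.1 ^ (β/4) * sg q.1 ^ (β/2)) * (‖a q.1‖^2 * ‖a q.2‖^2)) := by
          ring
      _ ≤ (Cc * (4:ℝ) ^ (β/4)) * (sg q.1 ^ β * (‖a q.1‖^2 * ‖a q.2‖^2)) := by
          apply mul_le_mul_of_nonneg_left _
            (mul_nonneg hCc0 (Real.rpow_nonneg (by norm_num) _))
          apply mul_le_mul_of_nonneg_right hexp (by positivity)
      _ = (Cc * (4:ℝ) ^ (β/4)) * (sg q.1 ^ β * ‖a q.1‖^2 * ‖a q.2‖^2) := by ring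
  calc ∑ q ∈ (Vset A).image φ, ∑ p ∈ (Vset A).filter (fun p => φ p = q),
        sg p.1 ^ (β/2) * (‖a p.1‖^2 * ‖a p.2.2‖^2)
      ≤ ∑ q ∈ (Vset A).image φ, (Cc * (4:ℝ) ^ (β/4)) * (sg q.1 ^ β * ‖a q.1‖^2 * ‖a q.2‖^2) :=
        Finset.sum_le_sum inner
    _ ≤ ∑ q ∈ A ×ˢ A, (Cc * (4:ℝ) ^ (β/4)) * (sg q.1 ^ β * ‖a q.1‖^2 * ‖a q.2‖^2) := by
        apply Finset.sum_le_sum_of_subset_of_nonneg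
        · intro q hq
          obtain ⟨p, hp, hpq⟩ := Finset.mem_image.mp hq
          have hpT : p ∈ TriS A := (Finset.mem_filter.mp hp).1
          have hpA := mem_triple_iff.mp (Finset.mem_filter.mp hpT).1
          have h1 : p.1 = q.1 := (Prod.ext_iff.mp hpq).1
          have h2 : p.2.2 = q.2 := (Prod.ext_iff.mp hpq).2
          rw [Finset.mem_product]
          exact ⟨h1 ▸ hpA.1, h2 ▸ hpA.2.2⟩
        · intro q _ _
          exact mul_nonneg (mul_nonneg hCc0 (Real.rpow_nonneg (by norm_num) _))
            (mul_nonneg (mul_nonneg (Real.rpow_nonneg (sg_pos q.1).le _) (by positivity))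
              (by positivity))
    _ = (Cc * (4:ℝ) ^ (β/4)) * ((∑ x ∈ A, sg x ^ β * ‖a x‖^2) * (∑ z ∈ A, ‖a z‖^2)) := by
        rw [← Finset.mul_sum]
        congr 1
        have hps := prod_split A A (fun x => sg x ^ β * ‖a x‖^2) (fun z => ‖a z‖^2)
        rw [← hps]

lemma jof_sub (p : Tr) : jof p - p.2.1 = p.1 + p.2.2 - p.2.1 - p.2.1 := by
  unfold jof; ring

lemma hYbound (hβ : 0 < β) (hCc0 : 0 ≤ Cc)
    (hCc : ∀ k : ℤ, 0 ≤ k → ((SolZ k).card : ℝ) ≤ Cc * (1 + (k : ℝ)) ^ (β/4)) :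
    ∑ p ∈ Vset A, sg p.1 ^ (-(β/2)) * (‖a p.2.1‖^2 * ‖Fnl a (jof p)‖^2) ≤
      (Cc * (4:ℝ) ^ (β/2)) *
        ((∑ x ∈ A, ‖a x‖^2) * (∑ j ∈ Jset A, ‖Fnl a j‖^2)) := by
  classical
  set φ : Tr → Pt × Pt := fun p => (p.2.1, jof p) with hφ
  have hmaps : ∀ p ∈ Vset A, φ p ∈ (Vset A).image φ := fun p hp =>
    Finset.mem_image_of_mem φ hp
  rw [← Finset.sum_fiberwise_of_maps_to hmaps
    (fun p => sg p.1 ^ (-(β/2)) * (‖a p.2.1‖^2 * ‖Fnl a (jof p)‖^2))]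
  have inner : ∀ q ∈ (Vset A).image φ,
      ∑ p ∈ (Vset A).filter (fun p => φ p = q),
          sg p.1 ^ (-(β/2)) * (‖a p.2.1‖^2 * ‖Fnl a (jof p)‖^2)
        ≤ (Cc * (4:ℝ) ^ (β/2)) * (‖a q.1‖^2 * ‖Fnl a q.2‖^2) := by
    intro q hq
    set dd : ℝ := 1 + ((nsq (q.2 - q.1)) : ℝ) with hdd
    have hdd1 : (1:ℝ) ≤ dd := by
      have h0 : (0:ℝ) ≤ ((nsq (q.2 - q.1)) : ℝ) := by exact_mod_cast nsq_nonneg' (q.2 - q.1)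
      rw [hdd]; linarith
    have hdd0 : (0:ℝ) < dd := lt_of_lt_of_le one_pos hdd1
    -- the diameter identity on the fiber
    have hdiam : ∀ p ∈ (Vset A).filter (fun p => φ p = q),
        nsq (p.1 - p.2.2) = nsq (q.2 - q.1) := by
      intro p hp
      obtain ⟨hpV, hpq⟩ := Finset.mem_filter.mp hp
      have hy : p.2.1 = q.1 := (Prod.ext_iff.mp hpq).1
      have hj : jof p = q.2 := (Prod.ext_iff.mp hpq).2
      have h1 : q.2 - q.1 = p.1 + p.2.2 - p.2.1 - p.2.1 := by
        rw [← hy, ← hj]; exact jof_sub p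
      rw [h1, circle_id (Finset.mem_filter.mp hpV).1]
    -- pointwise bound on the fiber
    have hpt : ∀ p ∈ (Vset A).filter (fun p => φ p = q),
        sg p.1 ^ (-(β/2)) * (‖a p.2.1‖^2 * ‖Fnl a (jof p)‖^2) ≤
          ((4:ℝ) ^ (β/2) * dd ^ (-(β/2))) * (‖a q.1‖^2 * ‖Fnl a q.2‖^2) := by
      intro p hp
      obtain ⟨hpV, hpq⟩ := Finset.mem_filter.mp hp
      have hy : p.2.1 = q.1 := (Prod.ext_iff.mp hpq).1
      have hj : jof p = q.2 := (Prod.ext_iff.mp hpq).2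
      have hr : dd ≤ 4 * sg p.1 := by
        rw [hdd, ← hdiam p hp]
        exact radius_le hpV
      have hmono : sg p.1 ^ (-(β/2)) ≤ (dd/4) ^ (-(β/2)) := by
        apply Real.rpow_le_rpow_of_nonpos (by positivity) (by linarith) (by linarith)
      have hsplit : (dd/4) ^ (-(β/2)) = (4:ℝ) ^ (β/2) * dd ^ (-(β/2)) := by
        rw [Real.div_rpow hdd0.le (by norm_num : (0:ℝ) ≤ 4), Real.rpow_neg (by norm_num : (0:ℝ) ≤ 4)]
        rw [div_inv_eq_mul, mul_comm]
      rw [hy, hj]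
      apply mul_le_mul_of_nonneg_right _ (by positivity)
      rw [← hsplit]
      exact hmono
    -- sum over the fiber
    have hsum := Finset.sum_le_card_nsmul ((Vset A).filter (fun p => φ p = q))
      (fun p => sg p.1 ^ (-(β/2)) * (‖a p.2.1‖^2 * ‖Fnl a (jof p)‖^2))
      (((4:ℝ) ^ (β/2) * dd ^ (-(β/2))) * (‖a q.1‖^2 * ‖Fnl a q.2‖^2)) hpt
    -- counting
    have hcard : ((((Vset A).filter (fun p => φ p = q))).card : ℝ) ≤ Cc * dd ^ (β/4) := by
      have hinj : ((Vset A).filter (fun p => φ p = q)).card ≤ (SolZ (nsq (q.2 - q.1))).card := by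
        apply Finset.card_le_card_of_injOn (fun p => p.1 - p.2.2)
        · intro p hp
          exact mem_SolZ (hdiam p hp)
        · intro p1 hp1 p2 hp2 he
          simp only [Finset.coe_filter, Set.mem_setOf_eq] at hp1 hp2
          have y1 : p1.2.1 = q.1 := (Prod.ext_iff.mp hp1.2).1
          have y2 : p2.2.1 = q.1 := (Prod.ext_iff.mp hp2.2).1
          have j1 : jof p1 = q.2 := (Prod.ext_iff.mp hp1.2).2
          have j2 : jof p2 = q.2 := (Prod.ext_iff.mp hp2.2).2
          have hs1 : p1.1 + p1.2.2 = q.2 + q.1 := by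
            have : p1.1 - p1.2.1 + p1.2.2 = q.2 := j1
            rw [y1] at this
            linear_combination this
          have hs2 : p2.1 + p2.2.2 = q.2 + q.1 := by
            have : p2.1 - p2.2.1 + p2.2.2 = q.2 := j2
            rw [y2] at this
            linear_combination this
          have he' : p1.1 - p1.2.2 = p2.1 - p2.2.2 := he
          have c1 := (Prod.ext_iff.mp he').1
          have c2 := (Prod.ext_iff.mp he').2
          have d1 := (Prod.ext_iff.mp (hs1.trans hs2.symm)).1
          have d2 := (Prod.ext_iff.mp (hs1.trans hs2.symm)).2
          simp only [Prod.fst_sub, Prod.fst_add, Prod.snd_sub, Prod.snd_add] at c1 c2 d1 d2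
          refine Prod.ext_iff.mpr ⟨Prod.ext_iff.mpr ⟨by omega, by omega⟩,
            Prod.ext_iff.mpr ⟨y1.trans y2.symm, Prod.ext_iff.mpr ⟨by omega, by omega⟩⟩⟩
      calc ((((Vset A).filter (fun p => φ p = q))).card : ℝ)
          ≤ ((SolZ (nsq (q.2 - q.1))).card : ℝ) := by exact_mod_cast hinj
        _ ≤ Cc * dd ^ (β/4) := by rw [hdd]; exact hCc _ (nsq_nonneg' _)
    -- assemble the fiber bound
    have hddle : dd ^ (β/4) * dd ^ (-(β/2)) ≤ 1 := by
      rw [← Real.rpow_add hdd0]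
      apply Real.rpow_le_one_of_one_le_of_nonpos hdd1
      linarith
    have hnnb : (0:ℝ) ≤ ‖a q.1‖^2 * ‖Fnl a q.2‖^2 := by positivity
    calc ∑ p ∈ (Vset A).filter (fun p => φ p = q),
            sg p.1 ^ (-(β/2)) * (‖a p.2.1‖^2 * ‖Fnl a (jof p)‖^2)
        ≤ (((Vset A).filter (fun p => φ p = q)).card : ℝ) *
            (((4:ℝ) ^ (β/2) * dd ^ (-(β/2))) * (‖a q.1‖^2 * ‖Fnl a q.2‖^2)) := by
          simpa [nsmul_eq_mul] using hsum
      _ ≤ (Cc * dd ^ (β/4)) * (((4:ℝ) ^ (β/2) * dd ^ (-(β/2))) * (‖a q.1‖^2 * ‖Fnl a q.2‖^2)) := by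
          apply mul_le_mul_of_nonneg_right hcard
          exact mul_nonneg (mul_nonneg (Real.rpow_nonneg (by norm_num) _)
            (Real.rpow_nonneg hdd0.le _)) hnnb
      _ = (Cc * (4:ℝ) ^ (β/2)) * ((dd ^ (β/4) * dd ^ (-(β/2))) * (‖a q.1‖^2 * ‖Fnl a q.2‖^2)) := by
          ring
      _ ≤ (Cc * (4:ℝ) ^ (β/2)) * (1 * (‖a q.1‖^2 * ‖Fnl a q.2‖^2)) := by
          apply mul_le_mul_of_nonneg_left _
            (mul_nonneg hCc0 (Real.rpow_nonneg (by norm_num) _))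
          exact mul_le_mul_of_nonneg_right hddle hnnb
      _ = (Cc * (4:ℝ) ^ (β/2)) * (‖a q.1‖^2 * ‖Fnl a q.2‖^2) := by ring
  calc ∑ q ∈ (Vset A).image φ, ∑ p ∈ (Vset A).filter (fun p => φ p = q),
        sg p.1 ^ (-(β/2)) * (‖a p.2.1‖^2 * ‖Fnl a (jof p)‖^2)
      ≤ ∑ q ∈ (Vset A).image φ, (Cc * (4:ℝ) ^ (β/2)) * (‖a q.1‖^2 * ‖Fnl a q.2‖^2) :=
        Finset.sum_le_sum inner
    _ ≤ ∑ q ∈ A ×ˢ Jset A, (Cc * (4:ℝ) ^ (β/2)) * (‖a q.1‖^2 * ‖Fnl a q.2‖^2) := by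
        apply Finset.sum_le_sum_of_subset_of_nonneg
        · intro q hq
          obtain ⟨p, hp, hpq⟩ := Finset.mem_image.mp hq
          have hpT : p ∈ TriS A := (Finset.mem_filter.mp hp).1
          have hpA := mem_triple_iff.mp (Finset.mem_filter.mp hpT).1
          have h1 : p.2.1 = q.1 := (Prod.ext_iff.mp hpq).1
          have h2 : jof p = q.2 := (Prod.ext_iff.mp hpq).2
          rw [Finset.mem_product]
          exact ⟨h1 ▸ hpA.2.1, h2 ▸ jof_mem_Jset hpT⟩
        · intro q _ _
          exact mul_nonneg (mul_nonneg hCc0 (Real.rpow_nonneg (by norm_num) _)) (by positivity)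
    _ = (Cc * (4:ℝ) ^ (β/2)) * ((∑ x ∈ A, ‖a x‖^2) * (∑ j ∈ Jset A, ‖Fnl a j‖^2)) := by
        rw [← Finset.mul_sum]
        congr 1
        have hps := prod_split A (Jset A) (fun x => ‖a x‖^2) (fun j => ‖Fnl a j‖^2)
        rw [← hps]

end ResMain3


/-- `‖F(a)‖_{l²} ≤ C ‖a‖_{l²}² ‖a‖_{h^β}` for every `β > 0`. -/
theorem l2_estimate_resonant_nonlinearity :
    ∀ β : ℝ, 0 < β → ∃ C : ℝ, ∀ a : ℤ × ℤ → ℂ, (Function.support a).Finite →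
      hnorm 0 (Fnl a) ≤ C * hnorm 0 a ^ 2 * hnorm β a := by
  intro β hβ
  classical
  open Finset ResMain ResMain2 ResMain3 ResCount2 ResCount4 in
  obtain ⟨Cc, hCc1, hCc⟩ := countSol (β/4) (by positivity)
  have hCc0 : (0:ℝ) ≤ Cc := le_trans zero_le_one hCc1
  set c₁ : ℝ := Cc * (4:ℝ) ^ (β/4) with hc₁
  set c₂ : ℝ := Cc * (4:ℝ) ^ (β/2) with hc₂
  have hc₁0 : 0 ≤ c₁ := mul_nonneg hCc0 (Real.rpow_nonneg (by norm_num) _)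
  have hc₂0 : 0 ≤ c₂ := mul_nonneg hCc0 (Real.rpow_nonneg (by norm_num) _)
  refine ⟨2 * Real.sqrt (c₁ * c₂), ?_⟩
  intro a ha
  set A : Finset ResMain.Pt := ha.toFinset with hAdef
  have hA0 : ∀ j ∉ A, a j = 0 := by
    intro j hj
    by_contra h
    exact hj (ha.mem_toFinset.mpr (Function.mem_support.mpr h))
  set X0 : ℝ := ∑ j ∈ A, ‖a j‖^2 with hX0def
  set Xβ : ℝ := ∑ j ∈ A, ResMain3.sg j ^ β * ‖a j‖^2 with hXβdef
  set P : ℝ := ∑ j ∈ ResMain2.Jset A, ‖Fnl a j‖^2 with hPdef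
  have hX0nn : 0 ≤ X0 := Finset.sum_nonneg fun j _ => by positivity
  have hXβnn : 0 ≤ Xβ := Finset.sum_nonneg fun j _ =>
    mul_nonneg (Real.rpow_nonneg (ResMain3.sg_pos j).le _) (by positivity)
  have hPnn : 0 ≤ P := Finset.sum_nonneg fun j _ => by positivity
  -- identify the three norms with finite sums
  have hnorm0a : hnorm 0 a = X0 ^ ((1:ℝ)/2) := by
    rw [hnorm]
    congr 1
    rw [tsum_eq_sum (s := A) (fun j hj => by rw [hA0 j hj]; simp)]
    apply Finset.sum_congr rfl
    intro j _
    rw [Real.rpow_zero, one_mul]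
  have hnormβa : hnorm β a = Xβ ^ ((1:ℝ)/2) := by
    rw [hnorm]
    congr 1
    rw [tsum_eq_sum (s := A) (fun j hj => by rw [hA0 j hj]; simp)]
    apply Finset.sum_congr rfl
    intro j _
    rfl
  have hnormFa : hnorm 0 (Fnl a) = P ^ ((1:ℝ)/2) := by
    rw [hnorm]
    congr 1
    rw [tsum_eq_sum (s := ResMain2.Jset A)
      (fun j hj => by rw [ResMain2.Fnl_zero hA0 hj]; simp)]
    apply Finset.sum_congr rfl
    intro j _
    rw [Real.rpow_zero, one_mul]
  -- the pointwise summand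
  set F : ResMain.Tr → ℝ :=
    fun p => ‖a p.1‖ * ‖a p.2.1‖ * ‖a p.2.2‖ * ‖Fnl a (ResMain.jof p)‖ with hFdef
  have hFnn : ∀ p, 0 ≤ F p := fun p => by
    rw [hFdef]; positivity
  -- Step 1 : P ≤ ∑ over TriS
  have hFle : ∀ j, ‖Fnl a j‖ ≤ ∑ p ∈ (ResMain2.TriS A).filter (fun p => ResMain.jof p = j),
      ‖a p.1‖ * ‖a p.2.1‖ * ‖a p.2.2‖ := by
    intro j
    rw [ResMain2.Fnl_eq hA0 j]
    refine (norm_sum_le _ _).trans (le_of_eq ?_)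
    apply Finset.sum_congr rfl
    intro p _
    rw [norm_mul, norm_mul, RCLike.norm_conj]
  have step1 : P ≤ ∑ p ∈ ResMain2.TriS A, F p := by
    calc P ≤ ∑ j ∈ ResMain2.Jset A,
          (∑ p ∈ (ResMain2.TriS A).filter (fun p => ResMain.jof p = j),
            ‖a p.1‖ * ‖a p.2.1‖ * ‖a p.2.2‖) * ‖Fnl a j‖ := by
          apply Finset.sum_le_sum
          intro j _
          rw [sq]
          exact mul_le_mul_of_nonneg_right (hFle j) (norm_nonneg _)
      _ = ∑ j ∈ ResMain2.Jset A,
          ∑ p ∈ (ResMain2.TriS A).filter (fun p => ResMain.jof p = j), F p := by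
          apply Finset.sum_congr rfl
          intro j _
          rw [Finset.sum_mul]
          apply Finset.sum_congr rfl
          intro p hp
          simp only [hFdef]
          rw [← (Finset.mem_filter.mp hp).2]
      _ = ∑ p ∈ ResMain2.TriS A, F p :=
          Finset.sum_fiberwise_of_maps_to (fun p hp => ResMain2.jof_mem_Jset hp) F
  -- Step 2 : symmetrization
  have step2 : ∑ p ∈ ResMain2.TriS A, F p ≤ 2 * ∑ p ∈ ResMain3.Vset A, F p := by
    have hsplit := Finset.sum_filter_add_sum_filter_not (ResMain2.TriS A)
      (fun p => nsq p.2.2 ≤ nsq p.1) F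
    have hswap : ∑ p ∈ (ResMain2.TriS A).filter (fun p => ¬ nsq p.2.2 ≤ nsq p.1), F p ≤
        ∑ p ∈ ResMain3.Vset A, F p := by
      set sw : ResMain.Tr → ResMain.Tr := fun p => (p.2.2, p.2.1, p.1) with hsw
      have hinj : ∀ x ∈ (ResMain2.TriS A).filter (fun p => ¬ nsq p.2.2 ≤ nsq p.1),
          ∀ y ∈ (ResMain2.TriS A).filter (fun p => ¬ nsq p.2.2 ≤ nsq p.1),
          sw x = sw y → x = y := by
        intro x _ y _ he
        have h1 : x.2.2 = y.2.2 := (Prod.ext_iff.mp he).1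
        have h2 : x.2.1 = y.2.1 := (Prod.ext_iff.mp (Prod.ext_iff.mp he).2).1
        have h3 : x.1 = y.1 := (Prod.ext_iff.mp (Prod.ext_iff.mp he).2).2
        exact Prod.ext_iff.mpr ⟨h3, Prod.ext_iff.mpr ⟨h2, h1⟩⟩
      have hjsw : ∀ p : ResMain.Tr, ResMain.jof (sw p) = ResMain.jof p := by
        intro p
        show p.2.2 - p.2.1 + p.1 = p.1 - p.2.1 + p.2.2
        ring
      have himg : ((ResMain2.TriS A).filter (fun p => ¬ nsq p.2.2 ≤ nsq p.1)).image sw ⊆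
          ResMain3.Vset A := by
        intro r hr
        obtain ⟨p, hp, rfl⟩ := Finset.mem_image.mp hr
        obtain ⟨hpT, hple⟩ := Finset.mem_filter.mp hp
        obtain ⟨hpA, hres⟩ := Finset.mem_filter.mp hpT
        have hmem := ResMain2.mem_triple_iff.mp hpA
        refine Finset.mem_filter.mpr ⟨Finset.mem_filter.mpr
          ⟨ResMain2.mem_triple_iff.mpr ⟨hmem.2.2, hmem.2.1, hmem.1⟩, ?_⟩, ?_⟩
        · show nsq p.2.2 - nsq p.2.1 + nsq p.1 = nsq (ResMain.jof (sw p))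
          rw [hjsw p]
          have : nsq p.1 - nsq p.2.1 + nsq p.2.2 = nsq (ResMain.jof p) := hres
          omega
        · show nsq p.1 ≤ nsq p.2.2
          simp only [Finset.mem_filter] at hp
          omega
      calc ∑ p ∈ (ResMain2.TriS A).filter (fun p => ¬ nsq p.2.2 ≤ nsq p.1), F p
          = ∑ p ∈ (ResMain2.TriS A).filter (fun p => ¬ nsq p.2.2 ≤ nsq p.1), F (sw p) := by
            apply Finset.sum_congr rfl
            intro p _
            rw [hFdef]
            show _ = ‖a p.2.2‖ * ‖a p.2.1‖ * ‖a p.1‖ * ‖Fnl a (ResMain.jof (sw p))‖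
            rw [hjsw p]
            ring
        _ = ∑ r ∈ ((ResMain2.TriS A).filter (fun p => ¬ nsq p.2.2 ≤ nsq p.1)).image sw, F r :=
            (Finset.sum_image hinj).symm
        _ ≤ ∑ p ∈ ResMain3.Vset A, F p :=
            Finset.sum_le_sum_of_subset_of_nonneg himg (fun p _ _ => hFnn p)
    have hV : ∑ p ∈ (ResMain2.TriS A).filter (fun p => nsq p.2.2 ≤ nsq p.1), F p
        = ∑ p ∈ ResMain3.Vset A, F p := rfl
    linarith [hsplit, hswap, hV]
  -- Step 3 : Cauchy-Schwarz with the two counting bounds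
  have step3 : (∑ p ∈ ResMain3.Vset A, F p) ^ 2 ≤ (c₁ * (Xβ * X0)) * (c₂ * (X0 * P)) := by
    have hfg : ∀ p ∈ ResMain3.Vset A, F p =
        (ResMain3.sg p.1 ^ (β/4) * (‖a p.1‖ * ‖a p.2.2‖)) *
        (ResMain3.sg p.1 ^ (-(β/4)) * (‖a p.2.1‖ * ‖Fnl a (ResMain.jof p)‖)) := by
      intro p _
      have h1 : ResMain3.sg p.1 ^ (β/4) * ResMain3.sg p.1 ^ (-(β/4)) = 1 := by
        rw [← Real.rpow_add (ResMain3.sg_pos p.1)]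
        norm_num
      calc F p = (ResMain3.sg p.1 ^ (β/4) * ResMain3.sg p.1 ^ (-(β/4))) * F p := by
            rw [h1, one_mul]
        _ = _ := by rw [hFdef]; ring
    rw [Finset.sum_congr rfl hfg]
    refine le_trans (Finset.sum_mul_sq_le_sq_mul_sq _ _ _) ?_
    have hXsq : ∑ p ∈ ResMain3.Vset A,
        (ResMain3.sg p.1 ^ (β/4) * (‖a p.1‖ * ‖a p.2.2‖)) ^ 2 ≤ c₁ * (Xβ * X0) := by
      have heq : ∀ p ∈ ResMain3.Vset A,
          (ResMain3.sg p.1 ^ (β/4) * (‖a p.1‖ * ‖a p.2.2‖)) ^ 2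
            = ResMain3.sg p.1 ^ (β/2) * (‖a p.1‖^2 * ‖a p.2.2‖^2) := by
        intro p _
        rw [mul_pow, mul_pow, ResMain.rpow_sq (ResMain3.sg_pos p.1).le]
        congr 1
        congr 1
        ring
      rw [Finset.sum_congr rfl heq]
      exact ResMain3.hXbound hβ hCc0 hCc
    have hYsq : ∑ p ∈ ResMain3.Vset A,
        (ResMain3.sg p.1 ^ (-(β/4)) * (‖a p.2.1‖ * ‖Fnl a (ResMain.jof p)‖)) ^ 2
          ≤ c₂ * (X0 * P) := by
      have heq : ∀ p ∈ ResMain3.Vset A,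
          (ResMain3.sg p.1 ^ (-(β/4)) * (‖a p.2.1‖ * ‖Fnl a (ResMain.jof p)‖)) ^ 2
            = ResMain3.sg p.1 ^ (-(β/2)) * (‖a p.2.1‖^2 * ‖Fnl a (ResMain.jof p)‖^2) := by
        intro p _
        rw [mul_pow, mul_pow, ResMain.rpow_sq (ResMain3.sg_pos p.1).le]
        congr 1
        congr 1
        ring
      rw [Finset.sum_congr rfl heq]
      exact ResMain3.hYbound hβ hCc0 hCc
    apply mul_le_mul hXsq hYsq _ (le_trans _ hXsq)
    · apply Finset.sum_nonneg
      intro p _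
      positivity
    · apply Finset.sum_nonneg
      intro p _
      positivity
  -- conclude
  have hKB : ∑ p ∈ ResMain3.Vset A, F p ≤
      Real.sqrt (c₁ * c₂) * (Xβ ^ ((1:ℝ)/2) * (X0 * P ^ ((1:ℝ)/2))) := by
    apply ResMain.le_of_sq
    · have := Real.sqrt_nonneg (c₁ * c₂)
      have h2 : 0 ≤ Xβ ^ ((1:ℝ)/2) := Real.rpow_nonneg hXβnn _
      have h3 : 0 ≤ P ^ ((1:ℝ)/2) := Real.rpow_nonneg hPnn _
      positivity
    · have hsq : (Real.sqrt (c₁ * c₂) * (Xβ ^ ((1:ℝ)/2) * (X0 * P ^ ((1:ℝ)/2)))) ^ 2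
          = (c₁ * c₂) * (Xβ * (X0^2 * P)) := by
        rw [mul_pow, mul_pow, mul_pow, Real.sq_sqrt (mul_nonneg hc₁0 hc₂0),
          ResMain.sq_rpow_half hXβnn, ResMain.sq_rpow_half hPnn]
      rw [hsq]
      calc (∑ p ∈ ResMain3.Vset A, F p) ^ 2 ≤ (c₁ * (Xβ * X0)) * (c₂ * (X0 * P)) := step3
        _ = (c₁ * c₂) * (Xβ * (X0^2 * P)) := by ring
  -- final chain
  rw [hnormFa, hnorm0a, hnormβa]
  have hD : P ≤ (2 * Real.sqrt (c₁ * c₂) * (X0 ^ ((1:ℝ)/2)) ^ 2 * Xβ ^ ((1:ℝ)/2)) *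
      P ^ ((1:ℝ)/2) := by
    rw [ResMain.sq_rpow_half hX0nn]
    calc P ≤ ∑ p ∈ ResMain2.TriS A, F p := step1
      _ ≤ 2 * ∑ p ∈ ResMain3.Vset A, F p := step2
      _ ≤ 2 * (Real.sqrt (c₁ * c₂) * (Xβ ^ ((1:ℝ)/2) * (X0 * P ^ ((1:ℝ)/2)))) := by
          linarith [hKB]
      _ = (2 * Real.sqrt (c₁ * c₂) * X0 * Xβ ^ ((1:ℝ)/2)) * P ^ ((1:ℝ)/2) := by ring
  have hDnn : 0 ≤ 2 * Real.sqrt (c₁ * c₂) * (X0 ^ ((1:ℝ)/2)) ^ 2 * Xβ ^ ((1:ℝ)/2) := by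
    have h1 := Real.sqrt_nonneg (c₁ * c₂)
    have h2 : 0 ≤ Xβ ^ ((1:ℝ)/2) := Real.rpow_nonneg hXβnn _
    positivity
  rcases eq_or_lt_of_le hPnn with hP0 | hP0
  · rw [← hP0]
    rw [Real.zero_rpow (by norm_num)]
    exact hDnn
  · have hPr : 0 < P ^ ((1:ℝ)/2) := Real.rpow_pos_of_pos hP0 _
    have hPP : P = P ^ ((1:ℝ)/2) * P ^ ((1:ℝ)/2) := by
      rw [← sq, ResMain.sq_rpow_half hPnn]
    exact le_of_mul_le_mul_right (by rw [← hPP]; exact hD) hPr
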